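/- Let ε be a standard normal random variable and let Φ denote the standard normal cumulative distribution function. Let Z_σ = Φ(ε/σ) for σ > 0. Then for every σ ∈ (0,1) and every t ∈ (0, 1/2), P(|Z_σ − 1/2| > t) > P(|Z_1 − 1/2| > t); that is, |Z_σ − 1/2| is strictly stochastically larger than |Z_1 − 1/2| on (0, 1/2). -/

import Mathlib

open MeasureTheory ProbabilityTheory

/-- The standard normal cumulative distribution function `Φ`. -/
noncomputable def stdNormalCDF (x : ℝ) : ℝ :=
  (ProbabilityTheory.gaussianReal 0 1 (Set.Iic x)).toReal

lemma hv1 : (1 : NNReal) ≠ 0 := one_ne_zero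

lemma stdGauss_ne_top (s : Set ℝ) : gaussianReal 0 1 s ≠ ⊤ := measure_ne_top _ _

lemma stdNormalCDF_mono : Monotone stdNormalCDF := fun a b hab =>
  ENNReal.toReal_mono (stdGauss_ne_top _) (measure_mono (Set.Iic_subset_Iic.2 hab))

lemma stdNormalCDF_strictMono : StrictMono stdNormalCDF := by
  intro a b hab
  have hsplit : Set.Iic a ∪ Set.Ioc a b = Set.Iic b := Set.Iic_union_Ioc_eq_Iic hab.le
  have hdisj : Disjoint (Set.Iic a) (Set.Ioc a b) := by
    simp [Set.disjoint_left]
    intro x hx hax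
    exact absurd hx (not_le.2 hax)
  have hμ : gaussianReal 0 1 (Set.Iic b)
      = gaussianReal 0 1 (Set.Iic a) + gaussianReal 0 1 (Set.Ioc a b) := by
    rw [← hsplit, measure_union hdisj measurableSet_Ioc]
  have hpos : 0 < gaussianReal 0 1 (Set.Ioc a b) := by
    rw [zero_lt_iff]
    intro h
    have := (gaussianReal_absolutelyContinuous' 0 hv1) h
    rw [Real.volume_Ioc] at this
    simp only [ENNReal.ofReal_eq_zero, sub_nonpos] at this
    exact absurd this (not_le.2 hab)
  unfold stdNormalCDF
  apply ENNReal.toReal_lt_toReal (stdGauss_ne_top _) (stdGauss_ne_top _) |>.2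
  rw [hμ]
  exact ENNReal.lt_add_right (stdGauss_ne_top _) hpos.ne'

lemma stdGauss_map_neg : (gaussianReal 0 1).map (fun y : ℝ => -1 * y) = gaussianReal 0 1 := by
  rw [gaussianReal_map_const_mul (-1 : ℝ)]
  norm_num

lemma stdGauss_Iic_neg (x : ℝ) :
    gaussianReal 0 1 (Set.Iic (-x)) = gaussianReal 0 1 (Set.Ici x) := by
  conv_lhs => rw [← stdGauss_map_neg]
  rw [Measure.map_apply (by fun_prop) measurableSet_Iic]
  congr 1
  ext y
  simp

lemma stdGauss_singleton (x : ℝ) : gaussianReal 0 1 {x} = 0 :=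
  (gaussianReal_absolutelyContinuous 0 hv1) (measure_singleton x)

lemma stdNormalCDF_neg (x : ℝ) : stdNormalCDF (-x) = 1 - stdNormalCDF x := by
  have h1 := stdGauss_Iic_neg x
  have h2 : gaussianReal 0 1 (Set.Ici x) = gaussianReal 0 1 (Set.Ioi x) := by
    apply le_antisymm
    · rw [← Set.Ioi_union_left]
      exact (measure_union_le _ _).trans (by rw [stdGauss_singleton]; simp)
    · exact measure_mono Set.Ioi_subset_Ici_self
  have h3 : gaussianReal 0 1 (Set.Ioi x) = 1 - gaussianReal 0 1 (Set.Iic x) := by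
    rw [← Set.compl_Iic, measure_compl measurableSet_Iic (stdGauss_ne_top _), measure_univ]
  unfold stdNormalCDF
  rw [h1, h2, h3, ENNReal.toReal_sub_of_le prob_le_one ENNReal.one_ne_top, ENNReal.toReal_one]

lemma stdNormalCDF_zero : stdNormalCDF 0 = 1 / 2 := by
  have := stdNormalCDF_neg 0
  rw [neg_zero] at this
  linarith

lemma stdNormalCDF_abs (y : ℝ) : |stdNormalCDF y - 1 / 2| = stdNormalCDF |y| - 1 / 2 := by
  rcases le_or_gt 0 y with h | h
  · rw [abs_of_nonneg h, abs_of_nonneg]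
    have := stdNormalCDF_mono h
    rw [stdNormalCDF_zero] at this
    linarith
  · have hy : stdNormalCDF y < 1 / 2 := by
      have := stdNormalCDF_strictMono h
      rwa [stdNormalCDF_zero] at this
    rw [abs_of_neg h, abs_of_neg (by linarith : stdNormalCDF y - 1 / 2 < 0),
      ← neg_neg y, stdNormalCDF_neg (-y), neg_neg]
    ring

lemma gaussianPDFReal_le_one (x : ℝ) : gaussianPDFReal 0 1 x ≤ 1 := by
  unfold gaussianPDFReal
  have h2π : (1 : ℝ) ≤ √(2 * Real.pi * 1) := by
    have h1 : (1:ℝ) ≤ 2 * Real.pi * 1 := by nlinarith [Real.pi_gt_three]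
    nlinarith [Real.sq_sqrt (by linarith : (0:ℝ) ≤ 2 * Real.pi * 1),
      Real.sqrt_nonneg (2 * Real.pi * 1)]
  calc (√(2 * Real.pi * 1))⁻¹ * Real.exp (-(x - 0) ^ 2 / (2 * 1))
      ≤ 1 * 1 := by
        apply mul_le_mul
        · rw [inv_le_one_iff₀]; right; exact h2π
        · apply Real.exp_le_one_iff.2; nlinarith [sq_nonneg (x - 0)]
        · positivity
        · norm_num
    _ = 1 := by norm_num

lemma stdGauss_Ioc_le (a : ℝ) (ha : 0 ≤ a) :
    gaussianReal 0 1 (Set.Ioc 0 a) ≤ ENNReal.ofReal a := by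
  rw [gaussianReal_apply 0 hv1]
  calc ∫⁻ x in Set.Ioc (0:ℝ) a, gaussianPDF 0 1 x
      ≤ ∫⁻ _ in Set.Ioc (0:ℝ) a, 1 := by
        apply lintegral_mono
        intro x
        unfold gaussianPDF
        exact ENNReal.ofReal_le_one.2 (gaussianPDFReal_le_one x)
    _ = volume (Set.Ioc (0:ℝ) a) := by rw [setLIntegral_one]
    _ = ENNReal.ofReal a := by rw [Real.volume_Ioc, sub_zero]

lemma stdNormalCDF_le_add (a : ℝ) (ha : 0 ≤ a) : stdNormalCDF a ≤ 1 / 2 + a := by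
  have hsplit : Set.Iic 0 ∪ Set.Ioc 0 a = Set.Iic a := Set.Iic_union_Ioc_eq_Iic ha
  have hdisj : Disjoint (Set.Iic (0:ℝ)) (Set.Ioc 0 a) := by
    simp [Set.disjoint_left]
    intro x hx h0x
    exact absurd hx (not_le.2 h0x)
  have hμ : gaussianReal 0 1 (Set.Iic a)
      = gaussianReal 0 1 (Set.Iic 0) + gaussianReal 0 1 (Set.Ioc 0 a) := by
    rw [← hsplit, measure_union hdisj measurableSet_Ioc]
  unfold stdNormalCDF
  rw [hμ, ENNReal.toReal_add (stdGauss_ne_top _) (stdGauss_ne_top _)]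
  have h1 : (gaussianReal 0 1 (Set.Iic 0)).toReal = 1 / 2 := stdNormalCDF_zero
  have h2 : (gaussianReal 0 1 (Set.Ioc 0 a)).toReal ≤ a := by
    have := stdGauss_Ioc_le a ha
    calc (gaussianReal 0 1 (Set.Ioc 0 a)).toReal
        ≤ (ENNReal.ofReal a).toReal := ENNReal.toReal_mono ENNReal.ofReal_ne_top this
      _ = a := ENNReal.toReal_ofReal ha
  linarith

lemma stdNormalCDF_tendsto : ∀ c < (1:ℝ), ∃ M : ℝ, c < stdNormalCDF M := by
  intro c hc
  rcases le_or_gt c 0 with h | h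
  · exact ⟨0, by rw [stdNormalCDF_zero]; linarith⟩
  have htd : Filter.Tendsto (fun x => gaussianReal 0 1 (Set.Iic x)) Filter.atTop
      (nhds (gaussianReal 0 1 Set.univ)) := tendsto_measure_Iic_atTop _
  rw [measure_univ] at htd
  have hlt : ENNReal.ofReal c < 1 := by
    rw [← ENNReal.ofReal_one]
    exact ENNReal.ofReal_lt_ofReal_iff_of_nonneg h.le |>.2 hc
  have := (htd.eventually_const_lt hlt).exists
  obtain ⟨M, hM⟩ := this
  refine ⟨M, ?_⟩
  unfold stdNormalCDF
  exact (ENNReal.ofReal_lt_iff_lt_toReal h.le (stdGauss_ne_top _)).1 hM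

/-- **Appendix A of Gneiting–Ranjan.** For standard normal `ε` and
`Z_σ = Φ(ε/σ)`: for every `σ ∈ (0,1)` and `t ∈ (0, 1/2)`,
`P(|Z_σ − 1/2| > t) > P(|Z_1 − 1/2| > t)`, i.e., `|Z_σ − 1/2|` is strictly
stochastically larger than `|Z_1 − 1/2|` on `(0, 1/2)`. -/
theorem gaussian_pit_stochastic_domination
    {Ω : Type*} [MeasurableSpace Ω] (Q : Measure Ω) [IsProbabilityMeasure Q]
    (ε : Ω → ℝ) (hεmeas : Measurable ε) (hεlaw : Q.map ε = gaussianReal 0 1) :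
    ∀ σ ∈ Set.Ioo (0 : ℝ) 1, ∀ t ∈ Set.Ioo (0 : ℝ) (1 / 2),
      Q {ω | t < |stdNormalCDF (ε ω) - 1 / 2|} <
        Q {ω | t < |stdNormalCDF (ε ω / σ) - 1 / 2|} := by
  rintro σ ⟨hσ0, hσ1⟩ t ⟨ht0, ht12⟩
  have hΦmeas : Measurable stdNormalCDF := stdNormalCDF_mono.measurable
  set S1 : Set ℝ := {x | t < |stdNormalCDF x - 1 / 2|} with hS1def
  set Sσ : Set ℝ := {x | t < |stdNormalCDF (x / σ) - 1 / 2|} with hSσdef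
  have hS1m : MeasurableSet S1 :=
    measurableSet_lt measurable_const ((hΦmeas.sub measurable_const).abs)
  have hSσm : MeasurableSet Sσ :=
    measurableSet_lt measurable_const
      (((hΦmeas.comp (measurable_id.div_const σ)).sub measurable_const).abs)
  have hQ1 : Q {ω | t < |stdNormalCDF (ε ω) - 1 / 2|} = gaussianReal 0 1 S1 := by
    rw [← hεlaw, Measure.map_apply hεmeas hS1m]; rfl
  have hQσ : Q {ω | t < |stdNormalCDF (ε ω / σ) - 1 / 2|} = gaussianReal 0 1 Sσ := by
    rw [← hεlaw, Measure.map_apply hεmeas hSσm]; rfl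
  rw [hQ1, hQσ]
  -- the threshold q
  set A : Set ℝ := {x | 0 ≤ x ∧ stdNormalCDF x ≤ 1 / 2 + t} with hAdef
  have hA0 : (0 : ℝ) ∈ A := ⟨le_refl 0, by rw [stdNormalCDF_zero]; linarith⟩
  obtain ⟨M, hM⟩ := stdNormalCDF_tendsto (1 / 2 + t) (by linarith)
  have hAbdd : BddAbove A := ⟨M, fun a ha =>
    le_of_not_gt fun h => absurd ha.2 (not_le.2 (lt_of_lt_of_le hM (stdNormalCDF_mono h.le)))⟩
  set q := sSup A with hqdef
  have ht2A : t / 2 ∈ A := by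
    refine ⟨by linarith, ?_⟩
    have := stdNormalCDF_le_add (t / 2) (by linarith)
    linarith
  have hq0 : 0 < q := lt_of_lt_of_le (by linarith) (le_csSup hAbdd ht2A)
  have hql : ∀ y, y < q → stdNormalCDF y ≤ 1 / 2 + t := by
    intro y hyq
    obtain ⟨a, haA, hya⟩ := exists_lt_of_lt_csSup ⟨0, hA0⟩ hyq
    exact (stdNormalCDF_mono hya.le).trans haA.2
  have hqg : ∀ y, q < y → 1 / 2 + t < stdNormalCDF y := by
    intro y hqy
    by_contra h
    push_neg at h
    exact absurd (le_csSup hAbdd ⟨le_trans hq0.le hqy.le, h⟩) (not_le.2 hqy)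
  -- S1 ⊆ Sσ
  have hsub : S1 ⊆ Sσ := by
    intro x hx
    simp only [hS1def, hSσdef, Set.mem_setOf_eq] at hx ⊢
    rw [stdNormalCDF_abs] at hx ⊢
    have habs : |x / σ| = |x| / σ := by rw [abs_div, abs_of_pos hσ0]
    rw [habs]
    have h2 : |x| ≤ |x| / σ := by
      rw [le_div_iff₀ hσ0]
      nlinarith [abs_nonneg x]
    linarith [stdNormalCDF_mono h2]
  -- the gap interval
  have hIoo : Set.Ioo (σ * q) q ⊆ Sσ \ S1 := by
    rintro x ⟨hx1, hx2⟩
    have hx0 : 0 < x := lt_trans (by positivity) hx1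
    constructor
    · simp only [hSσdef, Set.mem_setOf_eq]
      rw [stdNormalCDF_abs, abs_of_pos (by positivity : (0:ℝ) < x / σ)]
      have hxσ : q < x / σ := by rw [lt_div_iff₀ hσ0]; nlinarith
      linarith [hqg (x / σ) hxσ]
    · simp only [hS1def, Set.mem_setOf_eq, not_lt]
      rw [stdNormalCDF_abs, abs_of_pos hx0]
      linarith [hql x hx2]
  have hpos : 0 < gaussianReal 0 1 (Set.Ioo (σ * q) q) := by
    rw [zero_lt_iff]
    intro h
    have := gaussianReal_absolutelyContinuous' 0 hv1 h
    rw [Real.volume_Ioo] at this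
    simp only [ENNReal.ofReal_eq_zero, sub_nonpos] at this
    nlinarith
  have hdisj : Disjoint S1 (Set.Ioo (σ * q) q) :=
    Set.disjoint_left.mpr fun {x} hx1 hx2 => (hIoo hx2).2 hx1
  calc gaussianReal 0 1 S1
      < gaussianReal 0 1 S1 + gaussianReal 0 1 (Set.Ioo (σ * q) q) :=
        ENNReal.lt_add_right (stdGauss_ne_top _) hpos.ne'
    _ = gaussianReal 0 1 (S1 ∪ Set.Ioo (σ * q) q) :=
        (measure_union hdisj measurableSet_Ioo).symm
    _ ≤ gaussianReal 0 1 Sσ :=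
        measure_mono (Set.union_subset hsub fun x hx => (hIoo hx).1)
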